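/- Let G be a finite labelled graph with vertex set V, let P be a finite undirected graph, and let G' be the associated graph on V × V(P) with projection π onto the first coordinate. Then for every placement of finitely many cops and the robber on vertices of G': if every vertex v of G that equals or is adjacent in G to π(robber) is joined by an unprotected edge of G to the projection of some cop (an unprotected vertex being regarded as joined to itself by an unprotected edge), then every vertex of G' that equals or is adjacent in G' to the robber's vertex is occupied by or adjacent in G' to some cop. -/

import Mathlib

/-- A labelled graph: an undirected graph, loops allowed, each edge labelled
protected (`pro`) or unprotected (`unp`). -/
structure LabGraph (V : Type) where
  pro : V → V → Prop
  unp : V → V → Prop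
  pro_symm : ∀ v w, pro v w → pro w v
  unp_symm : ∀ v w, unp v w → unp w v

/-- Adjacency in the underlying graph of a labelled graph. -/
def labAdj {V : Type} (G : LabGraph V) (v w : V) : Prop := G.pro v w ∨ G.unp v w

/-- A single token move in a labelled graph: stay put or move along an edge. -/
def labStep {V : Type} (G : LabGraph V) (v w : V) : Prop := v = w ∨ labAdj G v w

/-- A single token move in a simple graph: stay put or move along an edge. -/
def sStep {V : Type} (G : SimpleGraph V) (v w : V) : Prop := v = w ∨ G.Adj v w

/-- A game position: the placement of the `n` cops and the robber's vertex. -/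
abbrev Pos (V : Type) (n : ℕ) := (Fin n → V) × V

/-- A robber strategy: from the history of positions (most recent first),
choose the robber's next vertex. -/
abbrev RStrat (V : Type) (n : ℕ) := List (Pos V n) → V

/-- A cops strategy: from the history of positions and the robber's newly
chosen vertex, choose the cops' new placement. -/
abbrev CStrat (V : Type) (n : ℕ) := List (Pos V n) → V → (Fin n → V)

/-- A robber strategy is legal w.r.t. a step relation `st` if it always
chooses a vertex reachable in one move from the robber's current vertex. -/
def RLegal {V : Type} {n : ℕ} (st : V → V → Prop) (ρ : RStrat V n) : Prop :=
  ∀ (p : Pos V n) (h : List (Pos V n)), st p.2 (ρ (p :: h))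

/-- A cops strategy is legal w.r.t. a step relation `st` if every cop always
moves to a vertex reachable in one move from its current vertex. -/
def CLegal {V : Type} {n : ℕ} (st : V → V → Prop) (σ : CStrat V n) : Prop :=
  ∀ (p : Pos V n) (h : List (Pos V n)) (r' : V) (i : Fin n),
    st (p.1 i) (σ (p :: h) r' i)

/-- The history (most recent position first) of the play determined by the
strategies `σ` and `ρ` from the initial position `init`.  In each round the
robber moves first and then all the cops move simultaneously. -/
def hist {V : Type} {n : ℕ} (σ : CStrat V n) (ρ : RStrat V n) (init : Pos V n) :
    ℕ → List (Pos V n)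
  | 0 => [init]
  | t + 1 =>
      let h := hist σ ρ init t
      let r' := ρ h
      (σ h r', r') :: h

/-- The position reached after `t` complete rounds of play. -/
def play {V : Type} {n : ℕ} (σ : CStrat V n) (ρ : RStrat V n) (init : Pos V n)
    (t : ℕ) : Pos V n :=
  match hist σ ρ init t with
  | [] => init
  | p :: _ => p

/-- Capture in the plain Cops and Robber game: at some time the robber is on
the same vertex as a cop (either initially, or just after the robber's move,
or just after the cops' move). -/
def crCapture {V : Type} {n : ℕ} (pl : ℕ → Pos V n) : Prop :=
  (∃ i, (pl 0).1 i = (pl 0).2) ∨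
    ∃ t, (∃ i, (pl t).1 i = (pl (t + 1)).2) ∨
      (∃ i, (pl (t + 1)).1 i = (pl (t + 1)).2)

/-- Capture in Cops and Robber with protection: at some round, just after the
robber's move, some cop can move onto the robber's vertex along an
unprotected edge (an unprotected loop allowing capture while standing on the
robber's vertex). -/
def crpCapture {V : Type} (G : LabGraph V) {n : ℕ} (pl : ℕ → Pos V n) : Prop :=
  ∃ t, ∃ i, G.unp ((pl t).1 i) ((pl (t + 1)).2)

/-- Cops have a winning strategy in C&R on `G` from the prescribed position
`init`, Robber to move. -/
def CopsWinFromCR {V : Type} (G : SimpleGraph V) {n : ℕ} (init : Pos V n) : Prop :=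
  ∃ σ : CStrat V n, CLegal (sStep G) σ ∧
    ∀ ρ : RStrat V n, RLegal (sStep G) ρ → crCapture (play σ ρ init)

/-- Robber has a winning strategy in C&R on `G` from the prescribed position
`init`, Robber to move. -/
def RobberWinFromCR {V : Type} (G : SimpleGraph V) {n : ℕ} (init : Pos V n) : Prop :=
  ∃ ρ : RStrat V n, RLegal (sStep G) ρ ∧
    ∀ σ : CStrat V n, CLegal (sStep G) σ → ¬ crCapture (play σ ρ init)

/-- Cops have a winning strategy with `n` cops in the game C&R on `G` with
elective initial positions: Cops first places the cops, then Robber places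
the robber and the pursuit starts, Robber moving first. -/
def CopsWinCR {V : Type} (G : SimpleGraph V) (n : ℕ) : Prop :=
  ∃ (c₀ : Fin n → V) (σ : CStrat V n), CLegal (sStep G) σ ∧
    ∀ (r₀ : V) (ρ : RStrat V n), RLegal (sStep G) ρ →
      crCapture (play σ ρ (c₀, r₀))

/-- Robber has a winning strategy with `n` cops in the game C&R on `G` with
elective initial positions. -/
def RobberWinCR {V : Type} (G : SimpleGraph V) (n : ℕ) : Prop :=
  ∀ c₀ : Fin n → V, ∃ (r₀ : V) (ρ : RStrat V n), RLegal (sStep G) ρ ∧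
    ∀ σ : CStrat V n, CLegal (sStep G) σ → ¬ crCapture (play σ ρ (c₀, r₀))

/-- Cops have a winning strategy in C&Rp on the labelled graph `G` from the
prescribed position `init`, Robber to move (the game `C&Rp*`). -/
def CopsWinFromCRp {V : Type} (G : LabGraph V) {n : ℕ} (init : Pos V n) : Prop :=
  ∃ σ : CStrat V n, CLegal (labStep G) σ ∧
    ∀ ρ : RStrat V n, RLegal (labStep G) ρ → crpCapture G (play σ ρ init)

/-- Robber has a winning strategy in C&Rp on the labelled graph `G` from the
prescribed position `init`, Robber to move. -/
def RobberWinFromCRp {V : Type} (G : LabGraph V) {n : ℕ} (init : Pos V n) : Prop :=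
  ∃ ρ : RStrat V n, RLegal (labStep G) ρ ∧
    ∀ σ : CStrat V n, CLegal (labStep G) σ → ¬ crpCapture G (play σ ρ init)

/-- Cops have a winning strategy with `n` cops in the game C&Rp on the
labelled graph `G` with elective initial positions. -/
def CopsWinCRp {V : Type} (G : LabGraph V) (n : ℕ) : Prop :=
  ∃ (c₀ : Fin n → V) (σ : CStrat V n), CLegal (labStep G) σ ∧
    ∀ (r₀ : V) (ρ : RStrat V n), RLegal (labStep G) ρ →
      crpCapture G (play σ ρ (c₀, r₀))

/-- Robber has a winning strategy with `n` cops in the game C&Rp on the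
labelled graph `G` with elective initial positions. -/
def RobberWinCRp {V : Type} (G : LabGraph V) (n : ℕ) : Prop :=
  ∀ c₀ : Fin n → V, ∃ (r₀ : V) (ρ : RStrat V n), RLegal (labStep G) ρ ∧
    ∀ σ : CStrat V n, CLegal (labStep G) σ → ¬ crpCapture G (play σ ρ (c₀, r₀))


/-- The graph `G'` associated to a labelled graph `G` and a graph `P`:
distinct vertices `(v,p)`, `(w,q)` are adjacent iff `v` and `w` are joined by
an unprotected edge of `G`, or `v = w`, or `v` and `w` are joined by a
protected edge of `G` and `p`, `q` are adjacent in `P`. -/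
def prodGraph {V W : Type} (G : LabGraph V) (P : SimpleGraph W) :
    SimpleGraph (V × W) where
  Adj x y := x ≠ y ∧
    (G.unp x.1 y.1 ∨ x.1 = y.1 ∨ (G.pro x.1 y.1 ∧ P.Adj x.2 y.2))
  symm := by
    constructor
    rintro x y ⟨hne, h | h | ⟨h1, h2⟩⟩
    · exact ⟨hne.symm, Or.inl (G.unp_symm _ _ h)⟩
    · exact ⟨hne.symm, Or.inr (Or.inl h.symm)⟩
    · exact ⟨hne.symm, Or.inr (Or.inr ⟨G.pro_symm _ _ h1, h2.symm⟩)⟩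
  loopless := ⟨fun x h => h.1 rfl⟩


/-- In the associated graph `G'` of a labelled graph `G` and a graph `P`:
if every vertex `v` of `G` equal or adjacent in `G` to the projection of the
robber is joined by an unprotected edge of `G` to the projection of some cop,
then every vertex of `G'` equal or adjacent to the robber's vertex is
occupied by or adjacent to some cop. -/
theorem statement9 {V W : Type} [Fintype V] [Fintype W] (G : LabGraph V)
    (P : SimpleGraph W) (m : ℕ) (c : Fin m → V × W) (rob : V × W)
    (hdoom : ∀ v : V, (v = rob.1 ∨ G.pro rob.1 v ∨ G.unp rob.1 v) →
      ∃ i, G.unp ((c i).1) v) :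
    ∀ u : V × W, (u = rob ∨ (prodGraph G P).Adj rob u) →
      ∃ i, c i = u ∨ (prodGraph G P).Adj (c i) u := by
  intro u hu
  have h1 : u.1 = rob.1 ∨ G.pro rob.1 u.1 ∨ G.unp rob.1 u.1 := by
    rcases hu with rfl | ⟨_, h | h | ⟨h, _⟩⟩
    · exact Or.inl rfl
    · exact Or.inr (Or.inr h)
    · exact Or.inl h.symm
    · exact Or.inr (Or.inl h)
  obtain ⟨i, hi⟩ := hdoom u.1 h1
  refine ⟨i, ?_⟩
  by_cases hc : c i = u
  · exact Or.inl hc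
  · exact Or.inr ⟨hc, Or.inl hi⟩
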